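/- Lemma 8(iii) (monotonicity of the fixed-point function): Let φ : [0,∞) → [0,∞) be continuous, strictly monotonically increasing and continuously differentiable with φ(0) = 0, and let α ∈ (0,1) satisfy α > sup_{x>0} φ′(x)/(φ′(x)+1). For τ_L > 0 let Ψ₁(τ_L) denote the unique positive solution τ_S of φ((1/α − 1)·τ_S + (1/α)·τ_L) = τ_S, and set Ψ₁(0) := 0. Then Ψ₁ is strictly monotonically increasing on [0,∞). -/

import Mathlib

/-- Lemma 8(iii): the fixed-point function `Ψ₁` (with `Ψ₁(0) = 0` and, for `y > 0`,
`Ψ₁(y)` the unique positive fixed point of `τ ↦ φ((1/α − 1)·τ + (1/α)·y)`)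
is strictly monotonically increasing on `[0,∞)`. -/
theorem stmt5 (φ : ℝ → ℝ) (α : ℝ) (Ψ₁ : ℝ → ℝ)
    (hφnn : ∀ x ∈ Set.Ici (0:ℝ), 0 ≤ φ x)
    (hφ0 : φ 0 = 0)
    (hφc : ContinuousOn φ (Set.Ici 0))
    (hφm : StrictMonoOn φ (Set.Ici 0))
    (hφd : DifferentiableOn ℝ φ (Set.Ici 0))
    (hφd' : ContinuousOn (deriv φ) (Set.Ici 0))
    (hα : α ∈ Set.Ioo (0:ℝ) 1)
    (hα1 : sSup {y : ℝ | ∃ x > 0, y = deriv φ x / (deriv φ x + 1)} < α)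
    (hΨ0 : Ψ₁ 0 = 0)
    (hΨ : ∀ y : ℝ, 0 < y →
      0 < Ψ₁ y ∧ φ ((1/α - 1) * Ψ₁ y + (1/α) * y) = Ψ₁ y) :
    StrictMonoOn Ψ₁ (Set.Ici 0) := by
  obtain ⟨hα0, hαlt1⟩ := hα
  have hc : (0:ℝ) < 1/α - 1 := by
    rw [sub_pos, lt_div_iff₀ hα0, one_mul]; exact hαlt1
  -- differentiability at positive points
  have hdiff : ∀ x : ℝ, 0 < x → DifferentiableAt ℝ φ x := fun x hx =>
    hφd.differentiableAt (Ici_mem_nhds hx)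
  -- derivative is nonnegative at positive points
  have hd0 : ∀ x : ℝ, 0 < x → 0 ≤ deriv φ x := by
    intro x hx
    have hda := (hdiff x hx).hasDerivAt
    rw [hasDerivAt_iff_tendsto_slope] at hda
    have hda' : Filter.Tendsto (slope φ x) (nhdsWithin x (Set.Ioi x)) (nhds (deriv φ x)) :=
      hda.mono_left (nhdsWithin_mono _ (fun y hy => ne_of_gt hy))
    refine ge_of_tendsto hda' ?_
    filter_upwards [self_mem_nhdsWithin] with y hy
    have hxy : x < y := hy
    have h1 : φ x ≤ φ y := le_of_lt (hφm (le_of_lt hx) (le_of_lt (hx.trans hxy)) hxy)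
    have : 0 < y - x := by linarith
    rw [slope_def_field]
    exact div_nonneg (by linarith) (le_of_lt this)
  -- key bound : deriv φ x * (1/α - 1) < 1
  have hkey : ∀ x : ℝ, 0 < x → deriv φ x * (1/α - 1) < 1 := by
    intro x hx
    have hbdd : BddAbove {y : ℝ | ∃ x > 0, y = deriv φ x / (deriv φ x + 1)} := by
      refine ⟨1, ?_⟩
      rintro y ⟨z, hz, rfl⟩
      have h0 := hd0 z hz
      have : deriv φ z + 1 > 0 := by linarith
      rw [div_le_one this]; linarith
    have hle : deriv φ x / (deriv φ x + 1) ≤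
        sSup {y : ℝ | ∃ x > 0, y = deriv φ x / (deriv φ x + 1)} :=
      le_csSup hbdd ⟨x, hx, rfl⟩
    have hlt : deriv φ x / (deriv φ x + 1) < α := lt_of_le_of_lt hle hα1
    have h0 := hd0 x hx
    have hpos : deriv φ x + 1 > 0 := by linarith
    rw [div_lt_iff₀ hpos] at hlt
    have : deriv φ x * (1 - α) < α := by nlinarith
    have heq : deriv φ x * (1/α - 1) = deriv φ x * (1 - α) / α := by
      field_simp
    rw [heq, div_lt_one hα0]
    linarith
  intro a ha b hb hab
  rcases eq_or_lt_of_le (show (0:ℝ) ≤ a from ha) with h0a | h0a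
  · rw [← h0a, hΨ0]
    exact (hΨ b (by rw [← h0a] at hab; exact hab)).1
  · -- a > 0
    obtain ⟨hs1pos, hs1eq⟩ := hΨ a h0a
    obtain ⟨hs2pos, hs2eq⟩ := hΨ b (h0a.trans hab)
    set c := 1/α - 1 with hcdef
    set β := 1/α with hβdef
    have hβ : (0:ℝ) < β := by positivity
    -- the function f(τ) = φ(c τ + β a) - τ is strictly antitone on [0,∞)
    set f : ℝ → ℝ := fun τ => φ (c * τ + β * a) - τ with hfdef
    have hmaps : ∀ τ : ℝ, 0 ≤ τ → 0 ≤ c * τ + β * a := by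
      intro τ hτ
      have : 0 ≤ c * τ := mul_nonneg (le_of_lt hc) hτ
      nlinarith
    have hfanti : StrictAntiOn f (Set.Ici 0) := by
      apply strictAntiOn_of_deriv_neg (convex_Ici 0)
      · apply ContinuousOn.sub _ continuousOn_id
        apply hφc.comp
        · exact (continuous_const.mul continuous_id).add continuous_const |>.continuousOn
        · intro τ hτ; exact hmaps τ hτ
      · intro τ hτ
        rw [interior_Ici] at hτ
        have hxpos : 0 < c * τ + β * a := by
          have : 0 < c * τ := mul_pos hc hτ
          nlinarith
        have hg : HasDerivAt (fun τ : ℝ => c * τ + β * a) c τ := by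
          simpa using ((hasDerivAt_id τ).const_mul c).add_const (β * a)
        have hφat : HasDerivAt φ (deriv φ (c * τ + β * a)) (c * τ + β * a) :=
          (hdiff _ hxpos).hasDerivAt
        have hcomp : HasDerivAt (fun τ => φ (c * τ + β * a))
            (deriv φ (c * τ + β * a) * c) τ := hφat.comp τ hg
        have hf' : HasDerivAt f (deriv φ (c * τ + β * a) * c - 1) τ := by
          exact hcomp.sub (hasDerivAt_id τ)
        rw [hf'.deriv]
        have := hkey (c * τ + β * a) hxpos
        linarith
    -- now suppose Ψ₁ b ≤ Ψ₁ a and derive a contradiction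
    by_contra hle
    push_neg at hle
    have hfb : f (Ψ₁ b) < 0 := by
      have harg : c * Ψ₁ b + β * a < c * Ψ₁ b + β * b := by
        have : β * a < β * b := mul_lt_mul_of_pos_left hab hβ
        linarith
      have h1 : φ (c * Ψ₁ b + β * a) < φ (c * Ψ₁ b + β * b) :=
        hφm (hmaps _ (le_of_lt hs2pos))
          (le_trans (hmaps _ (le_of_lt hs2pos)) (le_of_lt harg)) harg
      have h2 : φ (c * Ψ₁ b + β * b) = Ψ₁ b := hs2eq
      simp only [hfdef]
      linarith
    have hfa : f (Ψ₁ a) = 0 := by simp only [hfdef]; rw [hs1eq]; ring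
    rcases eq_or_lt_of_le hle with heq | hlt
    · rw [heq] at hfb; rw [hfa] at hfb; linarith
    · have := hfanti (le_of_lt hs2pos) (le_of_lt hs1pos) hlt
      rw [hfa] at this
      linarith
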